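/- Let μ be a probability distribution on a finite set S maximizing entropy subject to linear constraints A μ = b (where A is an m×|S| matrix). If a maximizer with full support exists, then there exists θ ∈ ℝ^m such that μ(s) = exp(⟨A_s, θ⟩ - F(θ)) for all s, where A_s is the s-th column of A and F(θ) = log ∑_s exp(⟨A_s, θ⟩) is the log-partition function. -/

import Mathlib

open Finset

lemma maxent_key
    {S : Type*} [Fintype S] [Nonempty S] {m : ℕ}
    (A : Matrix (Fin m) S ℝ) (b : Fin m → ℝ)
    (μ : S → ℝ)
    (hμ0 : ∀ s, 0 < μ s) (hμ1 : ∑ s, μ s = 1)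
    (hμA : A.mulVec μ = b)
    (hmax : ∀ ν : S → ℝ, (∀ s, 0 ≤ ν s) → ∑ s, ν s = 1 → A.mulVec ν = b →
      -∑ s, ν s * Real.log (ν s) ≤ -∑ s, μ s * Real.log (μ s))
    (v : S → ℝ) (hAv : A.mulVec v = 0) (hv : ∑ s, v s = 0) :
    ∑ s, v s * Real.log (μ s) = 0 := by
  set f : ℝ → ℝ := fun t => -∑ s, (μ s + t * v s) * Real.log (μ s + t * v s) with hf
  have hf0 : f 0 = -∑ s, μ s * Real.log (μ s) := by simp [hf]
  set ε : ℝ := Finset.univ.inf' Finset.univ_nonempty (fun s => μ s / (|v s| + 1)) with hε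
  have hεpos : 0 < ε := by
    rw [hε, Finset.lt_inf'_iff]
    intro s _
    exact div_pos (hμ0 s) (by positivity)
  have hpos : ∀ t : ℝ, |t| < ε → ∀ s, 0 < μ s + t * v s := by
    intro t ht s
    have h1 : ε ≤ μ s / (|v s| + 1) := Finset.inf'_le _ (Finset.mem_univ s)
    have h2 : |t * v s| ≤ ε * |v s| := by
      rw [abs_mul]
      exact mul_le_mul_of_nonneg_right ht.le (abs_nonneg _)
    have h3 : ε * |v s| ≤ (μ s / (|v s| + 1)) * |v s| :=
      mul_le_mul_of_nonneg_right h1 (abs_nonneg _)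
    have h4 : (μ s / (|v s| + 1)) * |v s| < μ s := by
      rw [div_mul_eq_mul_div, div_lt_iff₀ (by positivity)]
      nlinarith [hμ0 s, abs_nonneg (v s)]
    nlinarith [h2, h3, h4, neg_abs_le (t * v s)]
  have hlm : IsLocalMax f 0 := by
    filter_upwards [Metric.ball_mem_nhds (0:ℝ) hεpos] with t ht
    simp only [Metric.mem_ball, Real.dist_eq, sub_zero] at ht
    rw [hf0]
    apply hmax
    · intro s; exact (hpos t ht s).le
    · rw [Finset.sum_add_distrib, hμ1, ← Finset.mul_sum, hv, mul_zero, add_zero]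
    · have : (fun s => μ s + t * v s) = μ + t • v := by
        funext s; simp [Pi.add_apply, Pi.smul_apply, smul_eq_mul]
      rw [this, Matrix.mulVec_add, Matrix.mulVec_smul, hAv, hμA, smul_zero, add_zero]
  have hd : HasDerivAt f (-∑ s, v s * (Real.log (μ s) + 1)) 0 := by
    apply HasDerivAt.neg
    apply HasDerivAt.fun_sum
    intro s _
    have h1 : HasDerivAt (fun t : ℝ => μ s + t * v s) (v s) 0 := by
      have : HasDerivAt (fun x : ℝ => μ s + v s * x) (v s) 0 := by
        simpa using (hasDerivAt_id (0:ℝ)).const_mul (v s) |>.const_add (μ s)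
      exact this.congr_of_eventuallyEq (by filter_upwards with x; ring)
    have h2 : HasDerivAt (fun x : ℝ => x * Real.log x) (Real.log (μ s) + 1) (μ s + 0 * v s) := by
      simpa using Real.hasDerivAt_mul_log (x := μ s) (hμ0 s).ne'
    have := h2.comp 0 h1
    simpa [Function.comp_def, mul_comm] using this
  have := hlm.hasDerivAt_eq_zero hd
  have h5 : ∑ s, v s * (Real.log (μ s) + 1) = 0 := by linarith [this]
  have h6 : ∑ s, v s * (Real.log (μ s) + 1) = (∑ s, v s * Real.log (μ s)) + ∑ s, v s := by
    rw [← Finset.sum_add_distrib]; congr 1; funext s; ring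
  rw [h6, hv, add_zero] at h5
  exact h5

lemma maxent_affine
    {S : Type*} [Fintype S] [Nonempty S] {m : ℕ}
    (A : Matrix (Fin m) S ℝ) (μ : S → ℝ)
    (key : ∀ v : S → ℝ, A.mulVec v = 0 → ∑ s, v s = 0 → ∑ s, v s * Real.log (μ s) = 0) :
    ∃ (θ : Fin m → ℝ) (c : ℝ), ∀ s, Real.log (μ s) = (∑ i, A i s * θ i) + c := by
  classical
  set B : Fin (m+1) → EuclideanSpace ℝ S :=
    Fin.snoc (fun i => WithLp.toLp 2 (fun s => A i s : S → ℝ)) (WithLp.toLp 2 (fun _ => (1:ℝ))) with hB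
  set W : Submodule ℝ (EuclideanSpace ℝ S) := Submodule.span ℝ (Set.range B) with hW
  set g : EuclideanSpace ℝ S := WithLp.toLp 2 (fun s => Real.log (μ s) : S → ℝ) with hg
  have hgW : g ∈ W := by
    rw [← Submodule.orthogonal_orthogonal W]
    rw [Submodule.mem_orthogonal]
    intro v hv
    have hBv : ∀ i, (inner ℝ (B i) v : ℝ) = 0 := by
      intro i
      exact hv (B i) (Submodule.subset_span (Set.mem_range_self i))
    have hAv : A.mulVec (fun s => v s) = 0 := by
      funext i
      have := hBv i.castSucc
      simp only [hB, Fin.snoc_castSucc] at this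
      simp only [PiLp.inner_apply, RCLike.inner_apply, conj_trivial] at this
      simpa [Matrix.mulVec, dotProduct, mul_comm] using this
    have hsv : ∑ s, v s = 0 := by
      have := hBv (Fin.last m)
      simp only [hB, Fin.snoc_last] at this
      simpa [PiLp.inner_apply, RCLike.inner_apply] using this
    have := key (fun s => v s) hAv hsv
    simp only [PiLp.inner_apply, RCLike.inner_apply, conj_trivial]
    simpa [hg, mul_comm] using this
  rw [hW, Submodule.mem_span_range_iff_exists_fun] at hgW
  obtain ⟨c, hc⟩ := hgW
  refine ⟨fun i => c i.castSucc, c (Fin.last m), fun s => ?_⟩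
  have := congrArg (fun w : EuclideanSpace ℝ S => w s) hc
  rw [Fin.sum_univ_castSucc] at this
  simp only [hB, Fin.snoc_castSucc, Fin.snoc_last] at this
  have this' : (∑ x : Fin m, c x.castSucc • (fun s => A x s : S → ℝ)) s
      + (c (Fin.last m) • (fun _ => (1:ℝ) : S → ℝ)) s = Real.log (μ s) := by simpa [hg, WithLp.ofLp_sum] using this
  simp only [Finset.sum_apply, Pi.smul_apply, smul_eq_mul, mul_one] at this'
  rw [← this']
  congr 1
  apply Finset.sum_congr rfl
  intro i _
  ring

/-- A full-support maximum-entropy distribution subject to linear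
constraints `A μ = b` has exponential-family form. -/
theorem maxent_exponential_family
    {S : Type*} [Fintype S] [Nonempty S] {m : ℕ}
    (A : Matrix (Fin m) S ℝ) (b : Fin m → ℝ)
    (μ : S → ℝ)
    (hμ0 : ∀ s, 0 < μ s) (hμ1 : ∑ s, μ s = 1)
    (hμA : A.mulVec μ = b)
    (hmax : ∀ ν : S → ℝ, (∀ s, 0 ≤ ν s) → ∑ s, ν s = 1 → A.mulVec ν = b →
      -∑ s, ν s * Real.log (ν s) ≤ -∑ s, μ s * Real.log (μ s)) :
    ∃ θ : Fin m → ℝ,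
      ∀ s, μ s = Real.exp ((∑ i, A i s * θ i) -
        Real.log (∑ s', Real.exp (∑ i, A i s' * θ i))) := by
  obtain ⟨θ, c, hθ⟩ := maxent_affine A μ (maxent_key A b μ hμ0 hμ1 hμA hmax)
  refine ⟨θ, fun s => ?_⟩
  have hμexp : ∀ s, μ s = Real.exp ((∑ i, A i s * θ i) + c) := by
    intro s
    rw [← hθ s, Real.exp_log (hμ0 s)]
  have hZ : Real.log (∑ s', Real.exp (∑ i, A i s' * θ i)) = -c := by
    have h1 : (∑ s', Real.exp (∑ i, A i s' * θ i)) * Real.exp c = 1 := by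
      rw [Finset.sum_mul, ← hμ1]
      apply Finset.sum_congr rfl
      intro s' _
      rw [hμexp s', Real.exp_add]
    have h2 : (∑ s', Real.exp (∑ i, A i s' * θ i)) = Real.exp (-c) := by
      rw [Real.exp_neg]
      field_simp at h1 ⊢
      linarith [h1]
    rw [h2, Real.log_exp]
  rw [hZ, hμexp s]
  ring_nf
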